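/- If an extended open graph has a gflow then |I| ≤ |O|; equivalently, the map g of a gflow, viewed as assigning to each non-output vertex a subset of non-input vertices, induces an injective-type counting constraint giving |Oᶜ| ≤ |Iᶜ|. -/

import Mathlib

open scoped symmDiff

inductive Pauli | X | Y | Z
deriving DecidableEq

inductive MPlane | XY | XZ | YZ
deriving DecidableEq

/-- The set of Pauli operators defining a measurement plane. -/
def MPlane.paulis : MPlane → Finset Pauli
  | .XY => {.X, .Y}
  | .XZ => {.X, .Z}
  | .YZ => {.Y, .Z}

variable {V : Type} [Fintype V] [DecidableEq V]

/-- Odd neighbourhood: vertices with an odd number of neighbours in `A`. -/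
def oddNbhd (G : SimpleGraph V) [DecidableRel G.Adj] (A : Finset V) : Finset V :=
  Finset.univ.filter fun w => Odd (A.filter (G.Adj w)).card

/-- `f` is extensive w.r.t. the strict order `r`. -/
def IsExtensive (O : Finset V) (r : V → V → Prop) (f : V → Finset V) : Prop :=
  ∀ u ∉ O, ∀ v ∈ f u, v ≠ u → r u v

/-- gflow of an extended open graph `(G, I, O, lam)`. -/
def IsGflow (G : SimpleGraph V) [DecidableRel G.Adj]
    (I O : Finset V) (lam : V → MPlane) (g : V → Finset V) : Prop :=
  (∀ u ∉ O, g u ⊆ Iᶜ) ∧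
  (∃ r : V → V → Prop, IsStrictOrder V r ∧
    IsExtensive O r (fun u => g u ∪ oddNbhd G (g u))) ∧
  ∀ u ∉ O,
    (lam u = .XY → u ∈ oddNbhd G (g u) ∧ u ∉ g u) ∧
    (lam u = .XZ → u ∈ g u ∧ u ∈ oddNbhd G (g u)) ∧
    (lam u = .YZ → u ∈ g u ∧ u ∉ oddNbhd G (g u))

/-- σ-normal forms for gflows. -/
def IsNF (σ : Pauli) (G : SimpleGraph V) [DecidableRel G.Adj]
    (O : Finset V) (g : V → Finset V) : Prop :=
  match σ with
  | .X => ∀ u ∉ O, oddNbhd G (g u) ⊆ insert u O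
  | .Y => ∀ u ∉ O, (g u ∆ oddNbhd G (g u)) ⊆ insert u O
  | .Z => ∀ u ∉ O, g u ⊆ insert u O

lemma zmod2_ne_zero : ∀ a : ZMod 2, a ≠ 0 → a = 1 := by decide

lemma zmod2_even {n : ℕ} (h : Even n) : (n : ZMod 2) = 0 := by
  obtain ⟨k, rfl⟩ := h; push_cast; ring_nf
  rw [show ((2:ZMod 2)) = 0 from rfl]; ring

lemma zmod2_odd {n : ℕ} (h : Odd n) : (n : ZMod 2) = 1 := by
  obtain ⟨k, rfl⟩ := h; push_cast
  rw [show ((2:ZMod 2)) = 0 from rfl]; ring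

omit [DecidableEq V] in
lemma mem_oddNbhd {G : SimpleGraph V} [DecidableRel G.Adj] {A : Finset V} {w : V} :
    w ∈ oddNbhd G A ↔ Odd ((A.filter (G.Adj w)).card) := by
  simp [oddNbhd]

/-- Existence of a gflow implies |I| ≤ |O|, equivalently |Oᶜ| ≤ |Iᶜ|. -/
theorem gflow_card_le (G : SimpleGraph V) [DecidableRel G.Adj]
    (I O : Finset V) (lam : V → MPlane)
    (h : ∃ g : V → Finset V, IsGflow G I O lam g) :
    I.card ≤ O.card ∧ Oᶜ.card ≤ Iᶜ.card := by
  obtain ⟨g, hg1, ⟨r, hro, hrext⟩, hg3⟩ := h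
  suffices hmain : Oᶜ.card ≤ Iᶜ.card by
    refine ⟨?_, hmain⟩
    have hI := Finset.card_compl (α := V) I
    have hO := Finset.card_compl (α := V) O
    have h1 : I.card ≤ Fintype.card V := I.card_le_univ
    have h2 : O.card ≤ Fintype.card V := O.card_le_univ
    omega
  haveI : Fact (Nat.Prime 2) := ⟨Nat.prime_two⟩
  set vv : {x // x ∈ Oᶜ} → ({x // x ∈ Iᶜ} → ZMod 2) :=
    fun w x => if (x : V) ∈ g w then 1 else 0 with hvv
  have hli : LinearIndependent (ZMod 2) vv := by
    rw [linearIndependent_iff']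
    intro s c hsum i his
    by_contra hci
    set T : Finset {x // x ∈ Oᶜ} := s.filter (fun j => c j ≠ 0) with hT
    have hiT : i ∈ T := Finset.mem_filter.mpr ⟨his, hci⟩
    haveI : IsTrans V r := hro.toIsTrans
    haveI : IsIrrefl V r := hro.toIrrefl
    have hwf : WellFounded (InvImage r (Subtype.val : {x // x ∈ Oᶜ} → V)) :=
      InvImage.wf _ (Finite.wellFounded_of_trans_of_irrefl r)
    obtain ⟨u, huT, hmin⟩ := hwf.has_min (↑T) ⟨i, Finset.mem_coe.mpr hiT⟩
    have huT : u ∈ T := Finset.mem_coe.mp huT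
    have huO : (u : V) ∉ O := Finset.mem_compl.mp u.2
    -- sum over T is zero at every coordinate of Iᶜ, hence at every vertex
    have hAll : ∀ y : V, ∑ j ∈ T, (if y ∈ g j then (1 : ZMod 2) else 0) = 0 := by
      intro y
      by_cases hy : y ∈ Iᶜ
      · have hx := congrFun hsum ⟨y, hy⟩
        simp only [Finset.sum_apply, Pi.smul_apply, Pi.zero_apply, smul_eq_mul, hvv] at hx
        have e1 : ∑ j ∈ T, c j * (if y ∈ g (j : V) then (1 : ZMod 2) else 0)
            = ∑ j ∈ s, c j * (if y ∈ g (j : V) then (1 : ZMod 2) else 0) := by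
          refine Finset.sum_subset (Finset.filter_subset _ s) ?_
          intro j hj hjn
          have hc0 : c j = 0 := by
            by_contra hc; exact hjn (Finset.mem_filter.mpr ⟨hj, hc⟩)
          rw [hc0, zero_mul]
        have e2 : ∑ j ∈ T, (if y ∈ g (j : V) then (1 : ZMod 2) else 0)
            = ∑ j ∈ T, c j * (if y ∈ g (j : V) then (1 : ZMod 2) else 0) := by
          refine Finset.sum_congr rfl fun j hj => ?_
          rw [zmod2_ne_zero _ (Finset.mem_filter.mp hj).2, one_mul]
        rw [e2, e1, hx]
      · refine Finset.sum_eq_zero fun j hj => ?_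
        have hjO : (j : V) ∉ O := Finset.mem_compl.mp j.2
        have : y ∉ g j := fun hmem => hy (hg1 j hjO hmem)
        simp [this]
    -- minimality: u is not in the correction set of any other j ∈ T
    have hexcl : ∀ j ∈ T, j ≠ u → (u : V) ∉ g j ∧ (u : V) ∉ oddNbhd G (g j) := by
      intro j hj hne
      have hjO : (j : V) ∉ O := Finset.mem_compl.mp j.2
      have hne' : (u : V) ≠ (j : V) := fun hv => hne (Subtype.ext hv.symm)
      constructor <;> intro hmem <;>
        exact hmin j (Finset.mem_coe.mpr hj)
          (hrext j hjO u (by simp [hmem]) hne')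
    have hu3 := hg3 u huO
    have key : (u : V) ∈ g u ∨ ((u : V) ∈ oddNbhd G (g u) ∧ (u : V) ∉ g u) := by
      rcases hlam : lam (u : V) with _ | _ | _
      · exact Or.inr (hu3.1 hlam)
      · exact Or.inl (hu3.2.1 hlam).1
      · exact Or.inl (hu3.2.2 hlam).1
    rcases key with hgu | ⟨hodd, hgu⟩
    · have := hAll u
      rw [Finset.sum_eq_single_of_mem u huT (fun j hj hne => by
        simp [(hexcl j hj hne).1])] at this
      simp [hgu] at this
    · -- XY case: sum the parity identity over the neighbours of u
      have hsum2 : ∑ j ∈ T, ((((g (j : V)).filter (G.Adj (u : V))).card : ZMod 2)) = 0 := by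
        have h0 : ∑ y ∈ Finset.univ.filter (G.Adj (u : V)), ∑ j ∈ T,
            (if y ∈ g (j : V) then (1 : ZMod 2) else 0) = 0 :=
          Finset.sum_eq_zero fun y _ => hAll y
        rw [Finset.sum_comm] at h0
        rw [← h0]
        refine Finset.sum_congr rfl fun j _ => ?_
        rw [Finset.sum_boole]
        congr 2
        ext y
        simp only [Finset.mem_filter, Finset.mem_univ, true_and]
        exact and_comm
      have hval : ∀ j ∈ T, j ≠ u →
          (((g (j : V)).filter (G.Adj (u : V))).card : ZMod 2) = 0 := by
        intro j hj hne
        refine zmod2_even (Nat.not_odd_iff_even.mp fun ho => ?_)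
        exact (hexcl j hj hne).2 (mem_oddNbhd.mpr ho)
      rw [Finset.sum_eq_single_of_mem u huT hval,
        zmod2_odd (mem_oddNbhd.mp hodd)] at hsum2
      exact one_ne_zero hsum2
  have hcard := hli.fintype_card_le_finrank
  rw [Module.finrank_pi, Fintype.card_coe, Fintype.card_coe] at hcard
  exact hcard
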